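/- Let X be an n-dimensional real Banach space with n ≥ 3, and let Y be a real Banach space having Property P_m for some natural number m. Let T : X → Y be a bounded linear operator such that: (a) M_T has at least 4 elements and the image T(M_T) has at most 2m elements; (b) there exists a basis {x_1, x_2, …, x_n} of X with x_1, x_2 ∈ M_T; and (c) there exist real scalars α_3, …, α_n and β_3, …, β_n such that for every w ∈ M_T, writing w = c_1 x_1 + c_2 x_2 + ⋯ + c_n x_n in this basis, one has c_1 + c_2 + α_3 c_3 + ⋯ + α_n c_n ≠ 0 and c_1 − c_2 + β_3 c_3 + ⋯ + β_n c_n ≠ 0. Then T does not satisfy the Bhatia–Šemrl property; that is, there exists a bounded linear operator A : X → Y with T ⊥_B A such that Tx is not Birkhoff–James orthogonal to Ax for any x ∈ M_T. -/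

import Mathlib

/-- Birkhoff–James orthogonality: `x ⊥_B y` iff `‖x + λ y‖ ≥ ‖x‖` for all real `λ`. -/
def BJOrth {E : Type*} [NormedAddCommGroup E] [NormedSpace ℝ E] (x y : E) : Prop :=
  ∀ lam : ℝ, ‖x‖ ≤ ‖x + lam • y‖

/-- The norm attainment set of a bounded linear operator. -/
def normAttainSet {X Y : Type*} [NormedAddCommGroup X] [NormedSpace ℝ X]
    [NormedAddCommGroup Y] [NormedSpace ℝ Y] (T : X →L[ℝ] Y) : Set X :=
  {x | ‖x‖ = 1 ∧ ‖T x‖ = ‖T‖}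

/-- Property `P_n`: for every `n` unit vectors, the union of their Birkhoff–James
orthogonality sets is a proper subset of the whole space. -/
def PropertyP (X : Type*) [NormedAddCommGroup X] [NormedSpace ℝ X] (n : ℕ) : Prop :=
  ∀ x : Fin n → X, (∀ i, ‖x i‖ = 1) → (⋃ i, {y : X | BJOrth (x i) y}) ≠ Set.univ

section aux

variable {E : Type*} [NormedAddCommGroup E] [NormedSpace ℝ E]

lemma bjo_neg_left {y z : E} (h : BJOrth y z) : BJOrth (-y) z := by
  intro lam
  have h' := h (-lam)
  have key : -(y + (-lam) • z) = -y + lam • z := by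
    rw [neg_add, neg_smul, neg_neg]
  calc ‖-y‖ = ‖y‖ := norm_neg y
    _ ≤ ‖y + (-lam) • z‖ := h'
    _ = ‖-(y + (-lam) • z)‖ := (norm_neg _).symm
    _ = ‖-y + lam • z‖ := by rw [key]

lemma bjo_smul_left {y z : E} {c : ℝ} (hc : 0 < c) (h : BJOrth y z) : BJOrth (c • y) z := by
  intro lam
  have h' := h (lam / c)
  have hc' : c ≠ 0 := ne_of_gt hc
  have key : c • (y + (lam / c) • z) = c • y + lam • z := by
    rw [smul_add, smul_smul, mul_div_cancel₀ _ hc']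
  calc ‖c • y‖ = c * ‖y‖ := by rw [norm_smul, Real.norm_of_nonneg hc.le]
    _ ≤ c * ‖y + (lam / c) • z‖ := mul_le_mul_of_nonneg_left h' hc.le
    _ = ‖c • (y + (lam / c) • z)‖ := by rw [norm_smul, Real.norm_of_nonneg hc.le]
    _ = ‖c • y + lam • z‖ := by rw [key]

lemma bjo_smul_right {y z : E} {c : ℝ} (hc : c ≠ 0) (h : BJOrth y (c • z)) : BJOrth y z := by
  intro lam
  have h' := h (lam / c)
  rwa [smul_smul, div_mul_cancel₀ _ hc] at h'

lemma oneSided (y z : E) :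
    (∀ lam : ℝ, 0 ≤ lam → ‖y‖ ≤ ‖y + lam • z‖) ∨
    (∀ lam : ℝ, lam ≤ 0 → ‖y‖ ≤ ‖y + lam • z‖) := by
  by_contra h
  push_neg at h
  obtain ⟨⟨a, ha0, ha⟩, ⟨b, hb0, hb⟩⟩ := h
  have ha' : 0 < a := by
    rcases ha0.lt_or_eq with h' | h'
    · exact h'
    · exfalso; rw [← h'] at ha; simp at ha
  have hb' : b < 0 := by
    rcases hb0.lt_or_eq with h' | h'
    · exact h'
    · exfalso; rw [h'] at hb; simp at hb
  have hab : 0 < a - b := by linarith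
  set s : ℝ := -b / (a - b) with hs
  have hs0 : 0 < s := div_pos (by linarith) hab
  have hs1 : s < 1 := by rw [div_lt_one hab]; linarith
  have hcoef : s * a + (1 - s) * b = 0 := by
    have h1 : s * (a - b) = -b := by rw [hs]; exact div_mul_cancel₀ _ hab.ne'
    linear_combination h1
  have key : y = s • (y + a • z) + (1 - s) • (y + b • z) := by
    match_scalars
    · ring
    · linarith [hcoef]
  have est : ‖y‖ < ‖y‖ := by
    calc ‖y‖ = ‖s • (y + a • z) + (1 - s) • (y + b • z)‖ := by rw [← key]
      _ ≤ ‖s • (y + a • z)‖ + ‖(1 - s) • (y + b • z)‖ := norm_add_le _ _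
      _ = s * ‖y + a • z‖ + (1 - s) * ‖y + b • z‖ := by
          rw [norm_smul, norm_smul, Real.norm_of_nonneg hs0.le,
            Real.norm_of_nonneg (by linarith : (0:ℝ) ≤ 1 - s)]
      _ < s * ‖y‖ + (1 - s) * ‖y‖ :=
          add_lt_add (mul_lt_mul_of_pos_left ha hs0)
            (mul_lt_mul_of_pos_left hb (by linarith))
      _ = ‖y‖ := by ring
  exact absurd est (lt_irrefl _)

end aux

theorem stmt3 {X Y : Type*} [NormedAddCommGroup X] [NormedSpace ℝ X] [CompleteSpace X]
    [NormedAddCommGroup Y] [NormedSpace ℝ Y] [CompleteSpace Y]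
    (n : ℕ) (hn : 3 ≤ n) (hX : Module.finrank ℝ X = n)
    (m : ℕ) (hPm : PropertyP Y m)
    (T : X →L[ℝ] Y)
    (hcard : 4 ≤ Cardinal.mk ↥(normAttainSet T))
    (hcard' : Cardinal.mk ↥(T '' normAttainSet T) ≤ (2 * m : ℕ))
    (b : Module.Basis (Fin n) ℝ X)
    (hb0 : b ⟨0, by omega⟩ ∈ normAttainSet T)
    (hb1 : b ⟨1, by omega⟩ ∈ normAttainSet T)
    (α β : Fin n → ℝ)
    (hαβ : ∀ w ∈ normAttainSet T,
      (b.repr w ⟨0, by omega⟩ + b.repr w ⟨1, by omega⟩ +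
        ∑ i ∈ Finset.univ.filter (fun i : Fin n => 2 ≤ (i : ℕ)), α i * b.repr w i) ≠ 0 ∧
      (b.repr w ⟨0, by omega⟩ - b.repr w ⟨1, by omega⟩ +
        ∑ i ∈ Finset.univ.filter (fun i : Fin n => 2 ≤ (i : ℕ)), β i * b.repr w i) ≠ 0) :
    ∃ A : X →L[ℝ] Y, (∀ lam : ℝ, ‖T‖ ≤ ‖T + lam • A‖) ∧
      ∀ x ∈ normAttainSet T, ¬ BJOrth (T x) (A x) := by
  classical
  haveI : FiniteDimensional ℝ X := Module.Finite.of_basis b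
  obtain ⟨i0, i1, hi0, hi1⟩ : ∃ i0 i1 : Fin n, (i0 : ℕ) = 0 ∧ (i1 : ℕ) = 1 :=
    ⟨⟨0, by omega⟩, ⟨1, by omega⟩, rfl, rfl⟩
  have hne01 : i0 ≠ i1 := by
    intro h; rw [h, hi1] at hi0; omega
  have hb0' : b i0 ∈ normAttainSet T := by
    rwa [show i0 = ⟨0, by omega⟩ from Fin.ext hi0]
  have hb1' : b i1 ∈ normAttainSet T := by
    rwa [show i1 = ⟨1, by omega⟩ from Fin.ext hi1]
  have hαβ' : ∀ w ∈ normAttainSet T,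
      (b.repr w i0 + b.repr w i1 +
        ∑ i ∈ Finset.univ.filter (fun i : Fin n => 2 ≤ (i : ℕ)), α i * b.repr w i) ≠ 0 ∧
      (b.repr w i0 - b.repr w i1 +
        ∑ i ∈ Finset.univ.filter (fun i : Fin n => 2 ≤ (i : ℕ)), β i * b.repr w i) ≠ 0 := by
    rw [show i0 = ⟨0, by omega⟩ from Fin.ext hi0, show i1 = ⟨1, by omega⟩ from Fin.ext hi1]
    exact hαβ
  have hfilter : Finset.univ.filter (fun i : Fin n => ¬ 2 ≤ (i : ℕ)) = {i0, i1} := by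
    ext i
    simp only [Finset.mem_filter, Finset.mem_univ, true_and, Finset.mem_insert,
      Finset.mem_singleton]
    rw [Fin.ext_iff, Fin.ext_iff, hi0, hi1]
    omega
  -- the two coefficient functions
  set cf : Fin n → ℝ := fun i => if (i : ℕ) = 0 then 1 else if (i : ℕ) = 1 then 1 else α i
    with hcf
  set cg : Fin n → ℝ := fun i => if (i : ℕ) = 0 then 1 else if (i : ℕ) = 1 then -1 else β i
    with hcg
  have hcf0 : cf i0 = 1 := by simp [hcf, hi0]
  have hcf1 : cf i1 = 1 := by simp [hcf, hi1]
  have hcg0 : cg i0 = 1 := by simp [hcg, hi0]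
  have hcg1 : cg i1 = -1 := by simp [hcg, hi1]
  have hsum : ∀ (c : Fin n → ℝ) (w : X), (b.constr ℝ c) w
      = c i0 * b.repr w i0 + c i1 * b.repr w i1 +
        ∑ i ∈ Finset.univ.filter (fun i : Fin n => 2 ≤ (i : ℕ)), c i * b.repr w i := by
    intro c w
    rw [Module.Basis.constr_apply_fintype]
    have e1 : ∀ i : Fin n, b.equivFun w i • c i = c i * b.repr w i := by
      intro i
      rw [Module.Basis.equivFun_apply, smul_eq_mul, mul_comm]
    rw [Finset.sum_congr rfl (fun i _ => e1 i),
      ← Finset.sum_filter_add_sum_filter_not Finset.univ (fun i : Fin n => 2 ≤ (i : ℕ)),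
      hfilter, Finset.sum_pair hne01]
    ring
  set flin : X →ₗ[ℝ] ℝ := b.constr ℝ cf with hflin
  set glin : X →ₗ[ℝ] ℝ := b.constr ℝ cg with hglin
  have hfv0 : flin (b i0) = 1 := by rw [hflin, Module.Basis.constr_basis]; exact hcf0
  have hfv1 : flin (b i1) = 1 := by rw [hflin, Module.Basis.constr_basis]; exact hcf1
  have hgv0 : glin (b i0) = 1 := by rw [hglin, Module.Basis.constr_basis]; exact hcg0
  have hgv1 : glin (b i1) = -1 := by rw [hglin, Module.Basis.constr_basis]; exact hcg1
  have hf : ∀ w ∈ normAttainSet T, flin w ≠ 0 := by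
    intro w hw
    rw [hflin, hsum cf w, hcf0, hcf1, one_mul, one_mul]
    have tail : ∑ i ∈ Finset.univ.filter (fun i : Fin n => 2 ≤ (i : ℕ)), cf i * b.repr w i
        = ∑ i ∈ Finset.univ.filter (fun i : Fin n => 2 ≤ (i : ℕ)), α i * b.repr w i := by
      refine Finset.sum_congr rfl (fun i hi => ?_)
      have h2 : 2 ≤ (i : ℕ) := (Finset.mem_filter.1 hi).2
      rw [hcf]
      simp only
      rw [if_neg (by omega), if_neg (by omega)]
    rw [tail]
    exact (hαβ' w hw).1
  have hg : ∀ w ∈ normAttainSet T, glin w ≠ 0 := by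
    intro w hw
    rw [hglin, hsum cg w, hcg0, hcg1, one_mul, neg_one_mul, ← sub_eq_add_neg]
    have tail : ∑ i ∈ Finset.univ.filter (fun i : Fin n => 2 ≤ (i : ℕ)), cg i * b.repr w i
        = ∑ i ∈ Finset.univ.filter (fun i : Fin n => 2 ≤ (i : ℕ)), β i * b.repr w i := by
      refine Finset.sum_congr rfl (fun i hi => ?_)
      have h2 : 2 ≤ (i : ℕ) := (Finset.mem_filter.1 hi).2
      rw [hcg]
      simp only
      rw [if_neg (by omega), if_neg (by omega)]
    rw [tail]
    exact (hαβ' w hw).2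
  -- T is nonzero
  have hT : ‖T‖ ≠ 0 := by
    intro h0
    have hker : LinearMap.ker flin ≠ ⊥ := by
      intro hbot
      have hinj : Function.Injective flin := LinearMap.ker_eq_bot.1 hbot
      have hle := LinearMap.finrank_le_finrank_of_injective hinj
      rw [hX] at hle
      simp [Module.finrank_self] at hle
      omega
    obtain ⟨v, hvmem, hv0⟩ := (Submodule.ne_bot_iff _).1 hker
    have hnv : ‖v‖ ≠ 0 := norm_ne_zero_iff.2 hv0
    set w : X := ‖v‖⁻¹ • v with hwdef
    have hw1 : ‖w‖ = 1 := by
      rw [hwdef, norm_smul, Real.norm_of_nonneg (inv_nonneg.2 (norm_nonneg v)),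
        inv_mul_cancel₀ hnv]
    have hwM : w ∈ normAttainSet T := by
      refine ⟨hw1, ?_⟩
      have h1 : ‖T w‖ ≤ ‖T‖ * ‖w‖ := T.le_opNorm w
      have h2 : ‖T w‖ = 0 := le_antisymm (by simpa [h0] using h1) (norm_nonneg _)
      rw [h2, h0]
    refine hf w hwM ?_
    have h3 : flin w = ‖v‖⁻¹ * flin v := by rw [hwdef, map_smul, smul_eq_mul]
    rw [h3, LinearMap.mem_ker.1 hvmem, mul_zero]
  have hTpos : 0 < ‖T‖ := (norm_nonneg T).lt_of_ne (Ne.symm hT)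
  -- the image set is finite
  have hSfin : (T '' normAttainSet T).Finite := by
    have : Finite ↥(T '' normAttainSet T) :=
      Cardinal.mk_lt_aleph0_iff.1 (lt_of_le_of_lt hcard' (Cardinal.nat_lt_aleph0 _))
    exact Set.finite_coe_iff.mp this
  set t : Finset Y := hSfin.toFinset with htdef
  have ht_mem : ∀ y, y ∈ t ↔ y ∈ T '' normAttainSet T := fun y => hSfin.mem_toFinset
  have ht_card : t.card ≤ 2 * m := by
    have h1 : Cardinal.mk ↥(T '' normAttainSet T) = (t.card : Cardinal) := by
      have hco : (↑t : Set Y) = T '' normAttainSet T := hSfin.coe_toFinset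
      rw [← hco]
      exact Cardinal.mk_coe_finset
    rw [h1] at hcard'
    exact_mod_cast hcard'
  have hMneg : ∀ w ∈ normAttainSet T, -w ∈ normAttainSet T := by
    rintro w ⟨h1, h2⟩
    exact ⟨by rw [norm_neg]; exact h1, by rw [map_neg, norm_neg]; exact h2⟩
  have htneg : ∀ y ∈ t, -y ∈ t := by
    intro y hy
    rw [ht_mem] at hy ⊢
    obtain ⟨w, hw, rfl⟩ := hy
    exact ⟨-w, hMneg w hw, by rw [map_neg]⟩
  have htnorm : ∀ y ∈ t, ‖y‖ = ‖T‖ := by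
    intro y hy
    rw [ht_mem] at hy
    obtain ⟨w, hw, rfl⟩ := hy
    exact hw.2
  have htne : ∀ y ∈ t, y ≠ -y := by
    intro y hy h
    have hy0 : y ≠ 0 := by
      intro h0
      have hn' := htnorm y hy
      rw [h0, norm_zero] at hn'
      exact hT hn'.symm
    have hyy : y + y = 0 := by nth_rewrite 2 [h]; exact add_neg_cancel y
    have h2 : (2 : ℝ) • y = 0 := by rw [two_smul]; exact hyy
    rcases smul_eq_zero.mp h2 with h' | h'
    · norm_num at h'
    · exact hy0 h'
  set idx : Y → ℕ := fun y => if h : y ∈ t then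
      ((Fintype.equivFinOfCardEq (Fintype.card_coe t)) ⟨y, h⟩ : ℕ) else 0 with hidxdef
  have hidx_inj : ∀ y ∈ t, ∀ y' ∈ t, idx y = idx y' → y = y' := by
    intro y hy y' hy' h
    simp only [hidxdef, dif_pos hy, dif_pos hy'] at h
    have h2 := (Fintype.equivFinOfCardEq (Fintype.card_coe t)).injective (Fin.ext h)
    exact Subtype.ext_iff.1 h2
  set tp : Finset Y := t.filter (fun y => idx y < idx (-y)) with htpdef
  have htp_sub : tp ⊆ t := Finset.filter_subset _ _
  have htp_cover : ∀ y ∈ t, y ∈ tp ∨ -y ∈ tp := by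
    intro y hy
    have hy' := htneg y hy
    rcases lt_trichotomy (idx y) (idx (-y)) with h | h | h
    · exact Or.inl (Finset.mem_filter.2 ⟨hy, h⟩)
    · exact absurd (hidx_inj y hy (-y) hy' h) (htne y hy)
    · refine Or.inr (Finset.mem_filter.2 ⟨hy', ?_⟩)
      rwa [neg_neg]
  have htp_card : tp.card ≤ m := by
    set tn : Finset Y := tp.image (fun y => -y) with htndef
    have hcardtn : tn.card = tp.card := Finset.card_image_of_injective tp neg_injective
    have hdisj : Disjoint tp tn := by
      rw [Finset.disjoint_left]
      intro y hy hyn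
      obtain ⟨u, hu, huy⟩ := Finset.mem_image.1 hyn
      have h1 := (Finset.mem_filter.1 hy).2
      have h2 := (Finset.mem_filter.1 hu).2
      rw [← huy, neg_neg] at h1
      omega
    have hsub : tp ∪ tn ⊆ t := by
      intro y hy
      rcases Finset.mem_union.1 hy with h | h
      · exact htp_sub h
      · obtain ⟨u, hu, rfl⟩ := Finset.mem_image.1 h
        exact htneg u (htp_sub hu)
    have hcu := Finset.card_union_of_disjoint hdisj
    have hle := Finset.card_le_card hsub
    omega
  set k := tp.card with hkdef
  set ek : ↥tp ≃ Fin k := Fintype.equivFinOfCardEq (Fintype.card_coe tp) with hekdef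
  set xs : Fin m → Y := fun i => if h : (i : ℕ) < k then ‖T‖⁻¹ • ((ek.symm ⟨i, h⟩ : Y))
    else ‖T‖⁻¹ • (T (b i0)) with hxsdef
  have hnorm1 : ∀ y : Y, y ∈ t → ‖‖T‖⁻¹ • y‖ = 1 := by
    intro y hy
    rw [norm_smul, Real.norm_of_nonneg (inv_nonneg.2 (norm_nonneg T)), htnorm y hy,
      inv_mul_cancel₀ hT]
  have hxs : ∀ i, ‖xs i‖ = 1 := by
    intro i
    by_cases h : (i : ℕ) < k
    · simp only [hxsdef, dif_pos h]
      exact hnorm1 _ (htp_sub (ek.symm ⟨i, h⟩).2)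
    · simp only [hxsdef, dif_neg h]
      exact hnorm1 _ ((ht_mem _).2 ⟨b i0, hb0', rfl⟩)
  obtain ⟨z, hz⟩ : ∃ z : Y, ∀ i : Fin m, ¬ BJOrth (xs i) z := by
    obtain ⟨z, hz⟩ := (Set.ne_univ_iff_exists_notMem _).1 (hPm xs hxs)
    exact ⟨z, fun i hBi => hz (Set.mem_iUnion.2 ⟨i, hBi⟩)⟩
  have hzw : ∀ w ∈ normAttainSet T, ¬ BJOrth (T w) z := by
    intro w hw hB
    have hTwt : T w ∈ t := (ht_mem _).2 ⟨w, hw, rfl⟩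
    have key : ∀ u, u ∈ tp → BJOrth u z → False := by
      intro u hu hBu
      set j : Fin k := ek ⟨u, hu⟩ with hjdef
      have hj : (j : ℕ) < m := lt_of_lt_of_le j.2 htp_card
      have hxsj : xs ⟨j, hj⟩ = ‖T‖⁻¹ • u := by
        simp only [hxsdef]
        rw [dif_pos (show ((⟨(j : ℕ), hj⟩ : Fin m) : ℕ) < k from j.2)]
        have h1 : (⟨((⟨(j : ℕ), hj⟩ : Fin m) : ℕ), j.2⟩ : Fin k) = j := rfl
        rw [h1, hjdef, Equiv.symm_apply_apply]
      refine hz ⟨j, hj⟩ ?_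
      rw [hxsj]
      exact bjo_smul_left (inv_pos.2 hTpos) hBu
    rcases htp_cover (T w) hTwt with h | h
    · exact key _ h hB
    · exact key _ h (bjo_neg_left hB)
  -- builder
  have build : ∀ F : X →ₗ[ℝ] ℝ, (∀ w ∈ normAttainSet T, F w ≠ 0) →
      (∃ u ∈ normAttainSet T, ∀ lam : ℝ, 0 ≤ lam → ‖T‖ ≤ ‖T u + (lam * F u) • z‖) →
      (∃ v ∈ normAttainSet T, ∀ lam : ℝ, lam ≤ 0 → ‖T‖ ≤ ‖T v + (lam * F v) • z‖) →
      ∃ A : X →L[ℝ] Y, (∀ lam : ℝ, ‖T‖ ≤ ‖T + lam • A‖) ∧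
        ∀ x ∈ normAttainSet T, ¬ BJOrth (T x) (A x) := by
    rintro F hF ⟨u, hu, hupos⟩ ⟨v, hv, hvneg⟩
    set A : X →L[ℝ] Y := LinearMap.toContinuousLinearMap (F.smulRight z) with hAdef
    have hA : ∀ w : X, A w = F w • z := fun w => rfl
    refine ⟨A, ?_, ?_⟩
    · intro lam
      have happ : ∀ w : X, ‖w‖ = 1 → ‖(T + lam • A) w‖ ≤ ‖T + lam • A‖ := by
        intro w hw
        have := (T + lam • A).le_opNorm w
        rwa [hw, mul_one] at this
      rcases le_or_gt 0 lam with hl | hl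
      · refine le_trans ?_ (happ u hu.1)
        rw [ContinuousLinearMap.add_apply, ContinuousLinearMap.smul_apply, hA, smul_smul]
        exact hupos lam hl
      · refine le_trans ?_ (happ v hv.1)
        rw [ContinuousLinearMap.add_apply, ContinuousLinearMap.smul_apply, hA, smul_smul]
        exact hvneg lam hl.le
    · intro x hx hB
      rw [hA] at hB
      exact hzw x hx (bjo_smul_right (hF x hx) hB)
  have hTb0 : ‖T (b i0)‖ = ‖T‖ := hb0'.2
  have hTb1 : ‖T (b i1)‖ = ‖T‖ := hb1'.2
  rcases oneSided (T (b i0)) z with h1 | h1 <;> rcases oneSided (T (b i1)) z with h2 | h2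
  · -- both positive side: use g
    refine build glin hg ⟨b i0, hb0', fun lam hl => ?_⟩ ⟨b i1, hb1', fun lam hl => ?_⟩
    · rw [hgv0, mul_one, ← hTb0]
      exact h1 lam hl
    · rw [hgv1, mul_neg_one, ← hTb1]
      exact h2 (-lam) (by linarith)
  · refine build flin hf ⟨b i0, hb0', fun lam hl => ?_⟩ ⟨b i1, hb1', fun lam hl => ?_⟩
    · rw [hfv0, mul_one, ← hTb0]
      exact h1 lam hl
    · rw [hfv1, mul_one, ← hTb1]
      exact h2 lam hl
  · refine build flin hf ⟨b i1, hb1', fun lam hl => ?_⟩ ⟨b i0, hb0', fun lam hl => ?_⟩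
    · rw [hfv1, mul_one, ← hTb1]
      exact h2 lam hl
    · rw [hfv0, mul_one, ← hTb0]
      exact h1 lam hl
  · -- both negative side: use g
    refine build glin hg ⟨b i1, hb1', fun lam hl => ?_⟩ ⟨b i0, hb0', fun lam hl => ?_⟩
    · rw [hgv1, mul_neg_one, ← hTb1]
      exact h2 (-lam) (by linarith)
    · rw [hgv0, mul_one, ← hTb0]
      exact h1 lam hl
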